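/- Let ρ ≥ 1, let {ψ̃_x}_{x ∈ X} be an orthonormal representation of degree ρ of the channel in a finite-dimensional complex inner product space, and let f be a unit vector in that space. Let n ≥ 1, let k : X → ℕ satisfy ∑_a k(a) = n, and let θ ∈ ℝ satisfy ∏_{a ∈ X} |⟨ψ̃_a, f⟩|^{2·k(a)} ≥ e^{−nθ}. Let M ≥ 2 and let c_1, …, c_M ∈ X^n be codewords each of composition k, and assume e^{−nθ} ≥ 1/M. Then max over pairs m ≠ m' of ∏_{i=1}^n ⟨ψ_{c_m(i)}, ψ_{c_{m'}(i)}⟩ is at least (e^{−nθ} − 1/M)^ρ. -/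

import Mathlib

open Finset

noncomputable def tvec {E : Type*} [NormedAddCommGroup E] [InnerProductSpace ℂ E]
    [FiniteDimensional ℂ E] (n : ℕ) (v : Fin n → E) :
    EuclideanSpace ℂ (Fin n → Fin (Module.finrank ℂ E)) :=
  WithLp.toLp 2 (fun j => ∏ i, (stdOrthonormalBasis ℂ E).repr (v i) (j i))

lemma tvec_inner {E : Type*} [NormedAddCommGroup E] [InnerProductSpace ℂ E]
    [FiniteDimensional ℂ E] (n : ℕ) (v w : Fin n → E) :
    (inner ℂ (tvec n v) (tvec n w) : ℂ) = ∏ i, (inner ℂ (v i) (w i) : ℂ) := by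
  classical
  have hvw : ∀ i, (inner ℂ (v i) (w i) : ℂ)
      = ∑ t, (starRingEnd ℂ) ((stdOrthonormalBasis ℂ E).repr (v i) t)
        * (stdOrthonormalBasis ℂ E).repr (w i) t := by
    intro i
    rw [← (stdOrthonormalBasis ℂ E).repr.inner_map_map (v i) (w i), PiLp.inner_apply]
    simp [RCLike.inner_apply, mul_comm]
  rw [Finset.prod_congr rfl (fun i _ => hvw i), Fintype.prod_sum, PiLp.inner_apply]
  apply Finset.sum_congr rfl
  intro j _
  simp only [tvec, RCLike.inner_apply, map_prod, ← Finset.prod_mul_distrib]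
  exact Finset.prod_congr rfl fun x _ => mul_comm _ _

lemma tvec_norm_one {E : Type*} [NormedAddCommGroup E] [InnerProductSpace ℂ E]
    [FiniteDimensional ℂ E] (n : ℕ) (v : Fin n → E) (hv : ∀ i, ‖v i‖ = 1) :
    ‖tvec n v‖ = 1 := by
  have h1 : (inner ℂ (tvec n v) (tvec n v) : ℂ) = 1 := by
    rw [tvec_inner]
    have : ∀ i, (inner ℂ (v i) (v i) : ℂ) = 1 := by
      intro i
      rw [inner_self_eq_norm_sq_to_K, hv]
      norm_num
    simp only [this, Finset.prod_const_one]
  rw [inner_self_eq_norm_sq_to_K] at h1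
  have h2 : ‖tvec n v‖ ^ 2 = 1 := by
    have := congrArg Complex.re h1
    simpa [← Complex.ofReal_pow] using this
  nlinarith [norm_nonneg (tvec n v)]
lemma gram_bound {F : Type*} [NormedAddCommGroup F] [InnerProductSpace ℂ F]
    {M : ℕ} (hM : 2 ≤ M) (u : Fin M → F) (f0 : F)
    (hf0 : ‖f0‖ = 1) (hun : ∀ m, ‖u m‖ = 1)
    (t : ℝ) (ht0 : 0 < t) (ht : ∀ m, t ≤ ‖(inner ℂ f0 (u m) : ℂ)‖ ^ 2) :
    ∃ m m', m ≠ m' ∧ t - 1 / (M : ℝ) ≤ ‖(inner ℂ (u m) (u m') : ℂ)‖ := by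
  classical
  have hM0 : (0:ℝ) < M := by
    have : (2:ℝ) ≤ M := by exact_mod_cast hM
    linarith
  set g : Fin M → ℂ := fun m => inner ℂ f0 (u m) with hgdef
  set A : ℝ := ∑ m, ‖g m‖ ^ 2 with hA
  have hAt : (M : ℝ) * t ≤ A := by
    calc (M : ℝ) * t = ∑ _m : Fin M, t := by
          rw [Finset.sum_const, Finset.card_univ, Fintype.card_fin, nsmul_eq_mul]
      _ ≤ A := Finset.sum_le_sum fun m _ => ht m
  have hA0 : 0 < A := lt_of_lt_of_le (by positivity) hAt
  set S : Finset (Fin M × Fin M) :=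
    (Finset.univ ×ˢ Finset.univ).filter (fun p => p.1 ≠ p.2) with hS
  have hSne : S.Nonempty := by
    refine ⟨(⟨0, by omega⟩, ⟨1, by omega⟩), ?_⟩
    simp [hS, Fin.ext_iff]
  obtain ⟨q, hqS, hqmax⟩ :=
    S.exists_max_image (fun p => ‖(inner ℂ (u p.1) (u p.2) : ℂ)‖) hSne
  set G : ℝ := ‖(inner ℂ (u q.1) (u q.2) : ℂ)‖ with hGdef
  have hGmem : ∀ p ∈ S, ‖(inner ℂ (u p.1) (u p.2) : ℂ)‖ ≤ G := hqmax
  set w : F := ∑ m, (starRingEnd ℂ) (g m) • u m with hw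
  have hFw : (inner ℂ f0 w : ℂ) = (A : ℝ) := by
    rw [hw, inner_sum]
    simp only [inner_smul_right]
    rw [hA]
    push_cast
    refine Finset.sum_congr rfl fun m _ => ?_
    have hgm : (inner ℂ f0 (u m) : ℂ) = g m := rfl
    rw [hgm]
    exact_mod_cast RCLike.conj_mul (g m)
  have hAw : A ≤ ‖w‖ := by
    have h1 : ‖(inner ℂ f0 w : ℂ)‖ ≤ ‖f0‖ * ‖w‖ := norm_inner_le_norm _ _
    rw [hFw, hf0, one_mul] at h1
    rwa [Complex.norm_real, Real.norm_eq_abs, abs_of_nonneg hA0.le] at h1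
  have hww : ‖w‖ ^ 2 ≤ A + G * ((M : ℝ) * A) := by
    have hexp : (inner ℂ w w : ℂ)
        = ∑ m, ∑ m', g m * ((starRingEnd ℂ) (g m') * inner ℂ (u m) (u m')) := by
      rw [hw, sum_inner]
      refine Finset.sum_congr rfl fun m _ => ?_
      rw [inner_sum]
      refine Finset.sum_congr rfl fun m' _ => ?_
      rw [inner_smul_left, inner_smul_right, RingHomCompTriple.comp_apply, RingHom.id_apply]
    have hnorm : ‖w‖ ^ 2 = ‖(inner ℂ w w : ℂ)‖ := by
      rw [inner_self_eq_norm_sq_to_K, norm_pow, RCLike.norm_ofReal, abs_norm]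
    have hbound : ‖(inner ℂ w w : ℂ)‖
        ≤ ∑ m, ∑ m', ‖g m‖ * ‖g m'‖ * ‖(inner ℂ (u m) (u m') : ℂ)‖ := by
      rw [hexp]
      refine le_trans (norm_sum_le _ _) (Finset.sum_le_sum fun m _ => ?_)
      refine le_trans (norm_sum_le _ _) (Finset.sum_le_sum fun m' _ => ?_)
      rw [norm_mul, norm_mul, RCLike.norm_conj]
      exact le_of_eq (by ring)
    have hsplit : ∑ m, ∑ m', ‖g m‖ * ‖g m'‖ * ‖(inner ℂ (u m) (u m') : ℂ)‖
        ≤ A + G * ((M : ℝ) * A) := by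
      have hdiag : ∀ m : Fin M, ‖(inner ℂ (u m) (u m) : ℂ)‖ = 1 := by
        intro m
        rw [inner_self_eq_norm_sq_to_K, hun]
        norm_num
      have step : ∀ m : Fin M,
          ∑ m', ‖g m‖ * ‖g m'‖ * ‖(inner ℂ (u m) (u m') : ℂ)‖
          ≤ ‖g m‖ ^ 2 + ∑ m' ∈ Finset.univ.erase m, G * (‖g m‖ * ‖g m'‖) := by
        intro m
        rw [← Finset.add_sum_erase _ _ (Finset.mem_univ m), hdiag, mul_one]
        refine add_le_add (le_of_eq (sq ‖g m‖).symm)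
          (Finset.sum_le_sum fun m' hm' => ?_)
        calc ‖g m‖ * ‖g m'‖ * ‖(inner ℂ (u m) (u m') : ℂ)‖
            ≤ ‖g m‖ * ‖g m'‖ * G := by
              refine mul_le_mul_of_nonneg_left ?_ (by positivity)
              exact hGmem (m, m') (by simp [hS, (Finset.mem_erase.1 hm').1.symm])
          _ = G * (‖g m‖ * ‖g m'‖) := by ring
      have hG0 : 0 ≤ G := le_trans (norm_nonneg _) (hGmem _ hSne.choose_spec)
      calc ∑ m, ∑ m', ‖g m‖ * ‖g m'‖ * ‖(inner ℂ (u m) (u m') : ℂ)‖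
          ≤ ∑ m, (‖g m‖ ^ 2 + ∑ m' ∈ Finset.univ.erase m, G * (‖g m‖ * ‖g m'‖)) :=
            Finset.sum_le_sum fun m _ => step m
        _ ≤ A + G * ((M : ℝ) * A) := by
            rw [Finset.sum_add_distrib, hA]
            gcongr
            calc ∑ m, ∑ m' ∈ Finset.univ.erase m, G * (‖g m‖ * ‖g m'‖)
                ≤ ∑ m : Fin M, ∑ m' : Fin M, G * (‖g m‖ * ‖g m'‖) := by
                  refine Finset.sum_le_sum fun m _ => ?_
                  refine Finset.sum_le_sum_of_subset_of_nonneg (Finset.erase_subset _ _)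
                    fun m' _ _ => by positivity
              _ = G * (∑ m, ‖g m‖) ^ 2 := by
                  rw [sq, Finset.sum_mul_sum, Finset.mul_sum]
                  exact Finset.sum_congr rfl fun m _ => by rw [Finset.mul_sum]
              _ ≤ G * ((M : ℝ) * A) := by
                  gcongr
                  have := sq_sum_le_card_mul_sum_sq (s := (Finset.univ : Finset (Fin M)))
                    (f := fun m => ‖g m‖)
                  simpa [hA, Finset.card_univ] using this
    rw [hnorm]; exact le_trans hbound hsplit
  have hAG : A ≤ 1 + G * (M : ℝ) := by
    have h1 : A ^ 2 ≤ A + G * ((M : ℝ) * A) := le_trans (by nlinarith [hAw, hA0.le]) hww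
    nlinarith [hA0]
  have htG : t - 1 / (M : ℝ) ≤ G := by
    have h1 : (M : ℝ) * t ≤ 1 + G * (M : ℝ) := le_trans hAt hAG
    have hinv : (M : ℝ) * (1 / M) = 1 := by field_simp
    nlinarith [h1, hM0, hinv]
  obtain ⟨m, m'⟩ := q
  have hne : m ≠ m' := by simpa [hS] using (Finset.mem_filter.1 hqS).2
  exact ⟨m, m', hne, htG⟩

/-- Constant-composition umbrella bound: for codewords all of composition `k` and a
handle `f` with `∏_a |⟨ψt a, f⟩|^{2 k(a)} ≥ e^{−nθ}`, some pair `m ≠ m'` of codewords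
has Bhattacharyya coefficient at least `(e^{−nθ} − 1/M)^ρ`. -/
theorem stmt4 {X Y : Type*} [Fintype X] [Fintype Y] [DecidableEq X]
    {E : Type*} [NormedAddCommGroup E] [InnerProductSpace ℂ E] [FiniteDimensional ℂ E]
    (W : X → Y → ℝ) (hW0 : ∀ x y, 0 ≤ W x y) (hW1 : ∀ x, ∑ y, W x y = 1)
    (ρ : ℝ) (hρ : 1 ≤ ρ)
    (ψt : X → E) (hψt : ∀ x, ‖ψt x‖ = 1)
    (hrep : ∀ x x', x ≠ x' →
      ‖(inner ℂ (ψt x) (ψt x') : ℂ)‖ ≤ (∑ y, Real.sqrt (W x y * W x' y)) ^ (1 / ρ))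
    (f : E) (hf : ‖f‖ = 1)
    (n : ℕ) (hn : 1 ≤ n) (k : X → ℕ) (hk : ∑ a, k a = n)
    (θ : ℝ) (hθ : Real.exp (-(n * θ)) ≤ ∏ a, ‖(inner ℂ (ψt a) f : ℂ)‖ ^ (2 * k a))
    (M : ℕ) (hM : 2 ≤ M)
    (c : Fin M → Fin n → X)
    (hc : ∀ m a, (Finset.univ.filter fun i => c m i = a).card = k a)
    (hMe : 1 / (M : ℝ) ≤ Real.exp (-(n * θ))) :
    ∃ m m', m ≠ m' ∧
      (Real.exp (-(n * θ)) - 1 / (M : ℝ)) ^ ρ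
        ≤ ∏ i, ∑ y, Real.sqrt (W (c m i) y * W (c m' i) y) := by
  classical
  set t := Real.exp (-(n * θ)) with ht
  have ht0 : 0 < t := Real.exp_pos _
  have hρ0 : (0:ℝ) < ρ := lt_of_lt_of_le one_pos hρ
  -- the tensor vectors
  have hun : ∀ m : Fin M, ‖tvec n (fun i => ψt (c m i))‖ = 1 :=
    fun m => tvec_norm_one n _ (fun i => hψt _)
  have hf0 : ‖tvec n (fun _ : Fin n => f)‖ = 1 := tvec_norm_one n _ (fun i => hf)
  -- handle overlaps
  have hgm : ∀ m : Fin M,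
      t ≤ ‖(inner ℂ (tvec n (fun _ : Fin n => f)) (tvec n (fun i => ψt (c m i))) : ℂ)‖ ^ 2 := by
    intro m
    have h1 : ‖(inner ℂ (tvec n (fun _ : Fin n => f)) (tvec n (fun i => ψt (c m i))) : ℂ)‖ ^ 2
        = ∏ i, ‖(inner ℂ (ψt (c m i)) f : ℂ)‖ ^ 2 := by
      rw [tvec_inner, norm_prod, ← Finset.prod_pow]
      refine Finset.prod_congr rfl fun i _ => ?_
      rw [← inner_conj_symm, RCLike.norm_conj]
    have h2 : ∏ i, ‖(inner ℂ (ψt (c m i)) f : ℂ)‖ ^ 2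
        = ∏ a, ‖(inner ℂ (ψt a) f : ℂ)‖ ^ (2 * k a) := by
      rw [← Finset.prod_fiberwise_of_maps_to (t := Finset.univ)
        (fun i _ => Finset.mem_univ (c m i)) (fun i => ‖(inner ℂ (ψt (c m i)) f : ℂ)‖ ^ 2)]
      refine Finset.prod_congr rfl fun a _ => ?_
      rw [Finset.prod_congr rfl (fun i hi => by
        rw [(Finset.mem_filter.1 hi).2]), Finset.prod_const, hc m a, ← pow_mul]
    rw [h1, h2]; exact hθ
  obtain ⟨m, m', hne, hG⟩ := gram_bound hM (fun m => tvec n (fun i => ψt (c m i)))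
    (tvec n (fun _ : Fin n => f)) hf0 hun t ht0 hgm
  refine ⟨m, m', hne, ?_⟩
  set B : Fin n → ℝ := fun i => ∑ y, Real.sqrt (W (c m i) y * W (c m' i) y) with hB
  have hB0 : ∀ i, 0 ≤ B i := fun i => Finset.sum_nonneg fun y _ => Real.sqrt_nonneg _
  have hstep : ‖(inner ℂ (tvec n (fun i => ψt (c m i))) (tvec n (fun i => ψt (c m' i))) : ℂ)‖
      ≤ (∏ i, B i) ^ (1 / ρ) := by
    rw [tvec_inner, norm_prod]
    have hib : ∀ i, ‖(inner ℂ (ψt (c m i)) (ψt (c m' i)) : ℂ)‖ ≤ (B i) ^ (1 / ρ) := by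
      intro i
      by_cases hcc : c m i = c m' i
      · have hBi : B i = 1 := by
          rw [hB]
          simp only [← hcc]
          rw [← hW1 (c m i)]
          exact Finset.sum_congr rfl fun y _ => Real.sqrt_mul_self (hW0 _ _)
        rw [hcc, inner_self_eq_norm_sq_to_K, hψt, hBi, Real.one_rpow]
        norm_num
      · exact hrep _ _ hcc
    calc ∏ i, ‖(inner ℂ (ψt (c m i)) (ψt (c m' i)) : ℂ)‖
        ≤ ∏ i, (B i) ^ (1 / ρ) :=
          Finset.prod_le_prod (fun i _ => norm_nonneg _) fun i _ => hib i
      _ = (∏ i, B i) ^ (1 / ρ) :=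
          Real.finset_prod_rpow _ _ (fun i _ => hB0 i) _
  have h1 : 0 ≤ t - 1 / (M : ℝ) := sub_nonneg.2 hMe
  calc (t - 1 / (M : ℝ)) ^ ρ ≤ ((∏ i, B i) ^ (1 / ρ)) ^ ρ :=
        Real.rpow_le_rpow h1 (le_trans hG hstep) hρ0.le
    _ = ∏ i, B i := by
        rw [← Real.rpow_mul (Finset.prod_nonneg fun i _ => hB0 i),
          one_div_mul_cancel hρ0.ne', Real.rpow_one]
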